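/- Let λ, p₂, q, φ be as follows: λ ∈ ℂ, |λ| = 1, λ not a root of unity; p₂ = −1/2; q(t) = 1 + q₂t² + Σ_{k≥2} q_{2k} t^{2k} with q₂(λ+1)² = p₂(λ−1)²; φ normalized and symmetric. Then for any integer M ≥ 2 there exists a unique polynomial Δq(t) = Σ_{k=2}^{M} η_{2k} t^{2k} such that Λ_{2M}( [S_{q+Δq}(φ⁻,φ)] ) = 1. Moreover, if Λ_{2N}( [S_q(φ⁻,φ)] − 1 ) = 0 for some N < M, then Λ_{2N}(Δq) = 0. -/

import Mathlib

/- Common setup: formal power series in two commuting variables `z, z̄` over `ℂ`,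
represented by their coefficient functions, together with the operators of
Treschev's linearizable billiard construction. -/

open scoped BigOperators

noncomputable section

namespace Treschev

/-- A formal power series `f = Σ_{j,k≥0} f_{j,k} z^j z̄^k`, given by its coefficients. -/
abbrev FPS : Type := ℕ → ℕ → ℂ

/-- A formal power series in one variable `t`, given by its coefficients. -/
abbrev OPS : Type := ℕ → ℂ

/-- Product of two formal power series (Cauchy product). -/
def fmul (f g : FPS) : FPS := fun j k =>
  ∑ a ∈ Finset.range (j + 1), ∑ b ∈ Finset.range (k + 1), f a b * g (j - a) (k - b)

/-- The constant series `1`. -/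
def oneF : FPS := fun j k => if j = 0 ∧ k = 0 then 1 else 0

/-- Powers of a formal power series. -/
def fpow (f : FPS) : ℕ → FPS
  | 0 => oneF
  | n + 1 => fmul f (fpow f n)

/-- Substitution of a two-variable series `u` with zero constant term into a
one-variable series `q` (the formula is the correct one whenever `u 0 0 = 0`). -/
def substOne (q : OPS) (u : FPS) : FPS := fun j k =>
  ∑ m ∈ Finset.range (j + k + 1), q m * fpow u m j k

/-- Substitution `F(u, v)` of two series with zero constant term into a two-variable
series `F` (the formula is the correct one whenever `u 0 0 = 0` and `v 0 0 = 0`). -/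
def subst2 (F : FPS) (u v : FPS) : FPS := fun j k =>
  ∑ m ∈ Finset.range (j + k + 1), ∑ n ∈ Finset.range (j + k + 1),
    F m n * fmul (fpow u m) (fpow v n) j k

/-- The Taylor series of `cos`. -/
def cosSeries : OPS := fun n => if n % 2 = 0 then (-1 : ℂ) ^ (n / 2) / (n.factorial : ℂ) else 0

/-- `(t₁ + t₂)/2` as a two-variable series. -/
def halfSum : FPS := fun j k =>
  if j = 1 ∧ k = 0 then (1 / 2 : ℂ) else if j = 0 ∧ k = 1 then (1 / 2 : ℂ) else 0

/-- `(t₁ − t₂)/2` as a two-variable series. -/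
def halfDiff : FPS := fun j k =>
  if j = 1 ∧ k = 0 then (1 / 2 : ℂ) else if j = 0 ∧ k = 1 then (-(1 / 2) : ℂ) else 0

/-- The generating function `S_q(t₁,t₂) = q((t₁+t₂)/2)·cos((t₁−t₂)/2)` as a
formal power series in `t₁, t₂`. -/
def Sq (q : OPS) : FPS := fmul (substOne q halfSum) (substOne cosSeries halfDiff)

/-- Formal partial derivative with respect to the first variable. -/
def d1 (f : FPS) : FPS := fun j k => ((j + 1 : ℕ) : ℂ) * f (j + 1) k

/-- Formal partial derivative with respect to the second variable. -/
def d2 (f : FPS) : FPS := fun j k => ((k + 1 : ℕ) : ℂ) * f j (k + 1)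

/-- `f⁺`, with `(f⁺)_{j,k} = λ^{j−k} f_{j,k}`. -/
def plus (l : ℂ) (f : FPS) : FPS := fun j k => l ^ ((j : ℤ) - (k : ℤ)) * f j k

/-- `f⁻`, with `(f⁻)_{j,k} = λ^{k−j} f_{j,k}`. -/
def minus (l : ℂ) (f : FPS) : FPS := fun j k => l ^ ((k : ℤ) - (j : ℤ)) * f j k

/-- `∇f = f⁻ − λ⁻¹ f`. -/
def nab (l : ℂ) (f : FPS) : FPS := minus l f - l⁻¹ • f

/-- `∇⁺f = f − λ f⁺`. -/
def nabPlus (l : ℂ) (f : FPS) : FPS := f - l • plus l f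

/-- The average `[f] = Σ_j f_{j,j} (z z̄)^j`. -/
def avg (f : FPS) : FPS := fun j k => if j = k then f j k else 0

/-- The projection `Π₊(f) = [z f]/z`. -/
def Pip (f : FPS) : FPS := fun j k => if k = j + 1 then f j k else 0

/-- The projection `Π(f) = [z̄ f]/z̄`. -/
def Pim (f : FPS) : FPS := fun j k => if j = k + 1 then f j k else 0

/-- `E⁺`, the partial inverse of `∇⁺`. -/
def Eplus (l : ℂ) (f : FPS) : FPS := fun j k =>
  if k = j + 1 then 0 else f j k / (1 - l ^ ((j : ℤ) - (k : ℤ) + 1))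

/-- `E`, the partial inverse of `∇`. -/
def Emin (l : ℂ) (f : FPS) : FPS := fun j k =>
  if j = k + 1 then 0 else f j k / (l ^ ((k : ℤ) - (j : ℤ)) - l⁻¹)

/-- `Ẽ`, with `Ẽ(f − f⁺) = f − [f]`. -/
def Etilde (l : ℂ) (f : FPS) : FPS := fun j k =>
  if j = k then 0 else f j k / (1 - l ^ ((j : ℤ) - (k : ℤ)))

/-- `f ∘ I`, where `I(z,z̄) = (z̄,z)`. -/
def swapI (f : FPS) : FPS := fun j k => f k j

/-- Multiplication by `z`. -/
def mulz (f : FPS) : FPS := fun j k => if j = 0 then 0 else f (j - 1) k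

/-- Multiplication by `z̄`. -/
def mulzbar (f : FPS) : FPS := fun j k => if k = 0 then 0 else f j (k - 1)

/-- Division by `z` (valid on series divisible by `z`). -/
def divz (f : FPS) : FPS := fun j k => f (j + 1) k

/-- Multiplicative inverse `1/h` (the geometric-series formula, which is the correct
inverse whenever `h 0 0 ≠ 0`). -/
def finv (h : FPS) : FPS := fun j k =>
  (h 0 0)⁻¹ * ∑ m ∈ Finset.range (j + k + 1),
    fpow (fun a b => if a = 0 ∧ b = 0 then 0 else -(h a b) * (h 0 0)⁻¹) m j k

/-- Quotient `f/h` of formal power series. -/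
def fdiv (f h : FPS) : FPS := fmul f (finv h)

/-- `ℰ(q,φ) = ∂₂S_q(φ⁻,φ) + ∂₁S_q(φ,φ⁺)`. -/
def Err (l : ℂ) (q : OPS) (φ : FPS) : FPS :=
  subst2 (d2 (Sq q)) (minus l φ) φ + subst2 (d1 (Sq q)) φ (plus l φ)

/-- `∂_φℰ(q,φ)(w) = ∂₁₂S_q(φ⁻,φ)w⁻ + ∂₂₂S_q(φ⁻,φ)w + ∂₁₁S_q(φ,φ⁺)w + ∂₁₂S_q(φ,φ⁺)w⁺`. -/
def dErr (l : ℂ) (q : OPS) (φ : FPS) (w : FPS) : FPS :=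
  fmul (subst2 (d1 (d2 (Sq q))) (minus l φ) φ) (minus l w)
    + fmul (subst2 (d2 (d2 (Sq q))) (minus l φ) φ) w
    + fmul (subst2 (d1 (d1 (Sq q))) φ (plus l φ)) w
    + fmul (subst2 (d1 (d2 (Sq q))) φ (plus l φ)) (plus l w)

/-- `h = ∂₁₂S_q(φ⁻,φ)·φ_z·φ_z⁻`. -/
def hFun (l : ℂ) (q : OPS) (φ : FPS) : FPS :=
  fmul (fmul (subst2 (d1 (d2 (Sq q))) (minus l φ) φ) (d1 φ)) (minus l (d1 φ))

/-- `ψ = −E⁺( ℰ(q,φ)·φ_z − Π₊(ℰ(q,φ)·φ_z) )`. -/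
def psiFun (l : ℂ) (q : OPS) (φ : FPS) : FPS :=
  -Eplus l (fmul (Err l q φ) (d1 φ) - Pip (fmul (Err l q φ) (d1 φ)))

/-- `w = φ_z·E( ψ/h − Π(ψ/h) )`. -/
def wFun (l : ℂ) (q : OPS) (φ : FPS) : FPS :=
  fmul (d1 φ)
    (Emin l (fdiv (psiFun l q φ) (hFun l q φ) - Pim (fdiv (psiFun l q φ) (hFun l q φ))))

/-- `κ = ∂₁₂S_q(φ⁻,φ)·(λ⁻¹ φ_z⁻ φ_z̄ − λ φ_z̄⁻ φ_z)`. -/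
def kappaFun (l : ℂ) (q : OPS) (φ : FPS) : FPS :=
  fmul (subst2 (d1 (d2 (Sq q))) (minus l φ) φ)
    (l⁻¹ • fmul (minus l (d1 φ)) (d2 φ) - l • fmul (minus l (d2 φ)) (d1 φ))

/-- `g = φ_z̄ / φ_z`. -/
def gFun (φ : FPS) : FPS := fdiv (d2 φ) (d1 φ)

/-- `R₁ = ( −[z̄·ℰ·φ_z̄] + [z̄·g·[z·ℰ·φ_z]/z] ) / ( λ·z·[κ] )`. -/
def R1Fun (l : ℂ) (q : OPS) (φ : FPS) : FPS :=
  l⁻¹ • fmul (finv (avg (kappaFun l q φ)))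
    (divz (-avg (mulzbar (fmul (Err l q φ) (d2 φ)))
      + avg (mulzbar (fmul (gFun φ) (divz (avg (mulz (fmul (Err l q φ) (d1 φ)))))))))

/-- `R₂ = (1/z)·[ z̄·ψ·(λ⁻¹g − λg⁻)·([κ]−κ)/(κ·[κ]) ]`. -/
def R2Fun (l : ℂ) (q : OPS) (φ : FPS) : FPS :=
  divz (avg (mulzbar
    (fmul (fmul (psiFun l q φ) (l⁻¹ • gFun φ - l • minus l (gFun φ)))
      (fmul (avg (kappaFun l q φ) - kappaFun l q φ)
        (finv (fmul (kappaFun l q φ) (avg (kappaFun l q φ))))))))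

/-- `R₃ = [z·∂_z(S_q(φ⁻,φ))]/z − ∇⁺( h·Π(ψ/h) )`. -/
def R3Fun (l : ℂ) (q : OPS) (φ : FPS) : FPS :=
  Pip (d1 (subst2 (Sq q) (minus l φ) φ))
    - nabPlus l (fmul (hFun l q φ) (Pim (fdiv (psiFun l q φ) (hFun l q φ))))

/-- `R₄ = ∂_z(ℰ(q,φ))·(w/φ_z) + R₃/φ_z`. -/
def R4Fun (l : ℂ) (q : OPS) (φ : FPS) : FPS :=
  fmul (d1 (Err l q φ)) (fdiv (wFun l q φ) (d1 φ)) + fdiv (R3Fun l q φ) (d1 φ)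

/-- `φ = z + z̄ + O₃`. -/
def normalized (φ : FPS) : Prop :=
  φ 0 0 = 0 ∧ φ 1 0 = 1 ∧ φ 0 1 = 1 ∧ φ 2 0 = 0 ∧ φ 1 1 = 0 ∧ φ 0 2 = 0

/-- The weighted norm `‖f‖_ρ = Σ_{j,k} |f_{j,k}| ρ^{j+k} ∈ [0,∞]`. -/
def wnorm (ρ : ℝ) (f : FPS) : ENNReal :=
  ∑' p : ℕ × ℕ, ENNReal.ofReal (‖f p.1 p.2‖ * ρ ^ (p.1 + p.2))

/-- `D(f) = Σ_{n≥1} n f_n (z z̄)^n` for a series in `z z̄`. -/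
def Dop (f : FPS) : FPS := fun j k => if j = k then (j : ℂ) * f j k else 0

/-- `D̄(f − f₀) = Σ_{n≥1} (f_n/n) (z z̄)^n` for a series in `z z̄`. -/
def Dbar (f : FPS) : FPS := fun j k => if j = k ∧ j ≠ 0 then f j k / (j : ℂ) else 0

/-- The constant part `f₀` of a series. -/
def constPart (f : FPS) : FPS := fun j k => if j = 0 ∧ k = 0 then f 0 0 else 0

/-- `ξ₀ = ((λ⁻¹+1)z + (λ+1)z̄)/2`. -/
def xi0 (l : ℂ) : FPS := fun a b =>
  if a = 1 ∧ b = 0 then (l⁻¹ + 1) / 2 else if a = 0 ∧ b = 1 then (l + 1) / 2 else 0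

-- ===== auxiliary development =====

lemma fpow_succ' (f : FPS) (n : ℕ) : fpow f (n+1) = fmul f (fpow f n) := rfl
lemma fpow_zero' (f : FPS) : fpow f 0 = oneF := rfl

/-- embedding into iterated power series -/
def toPS (f : FPS) : PowerSeries (PowerSeries ℂ) :=
  PowerSeries.mk fun j => PowerSeries.mk fun k => f j k

lemma coeff_toPS (f : FPS) (j k : ℕ) :
    PowerSeries.coeff k (PowerSeries.coeff j (toPS f)) = f j k := by
  simp [toPS]

lemma coeff_mul_toPS (f g : FPS) (j k : ℕ) :
    PowerSeries.coeff k (PowerSeries.coeff j (toPS f * toPS g))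
      = fmul f g j k := by
  rw [PowerSeries.coeff_mul, map_sum, Finset.Nat.sum_antidiagonal_eq_sum_range_succ_mk]
  unfold fmul
  refine Finset.sum_congr rfl fun a _ => ?_
  rw [PowerSeries.coeff_mul, Finset.Nat.sum_antidiagonal_eq_sum_range_succ_mk]
  refine Finset.sum_congr rfl fun b _ => ?_
  simp [toPS]

lemma toPS_fmul (f g : FPS) : toPS (fmul f g) = toPS f * toPS g := by
  apply PowerSeries.ext; intro j; apply PowerSeries.ext; intro k
  rw [coeff_mul_toPS, coeff_toPS]

lemma toPS_one : toPS oneF = 1 := by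
  apply PowerSeries.ext; intro j; apply PowerSeries.ext; intro k
  simp only [toPS, PowerSeries.coeff_mk, PowerSeries.coeff_one, oneF]
  rcases Nat.eq_zero_or_pos j with rfl | hj
  · simp [PowerSeries.coeff_one]
  · rw [if_neg (by omega), if_neg (by omega : ¬ j = 0), map_zero]

lemma toPS_fpow (f : FPS) (n : ℕ) : toPS (fpow f n) = toPS f ^ n := by
  induction n with
  | zero => simpa [fpow_zero'] using toPS_one
  | succ n ih => rw [fpow_succ', toPS_fmul, ih, pow_succ, mul_comm]

lemma fpow_add_apply (u v : FPS) (m j k : ℕ) :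
    fpow (fun a b => u a b + v a b) m j k
      = ∑ i ∈ Finset.range (m+1), (m.choose i : ℂ) * fmul (fpow u i) (fpow v (m-i)) j k := by
  have hadd : toPS (fun a b => u a b + v a b) = toPS u + toPS v := by
    apply PowerSeries.ext; intro a; apply PowerSeries.ext; intro b
    simp [toPS]
  have h1 : toPS (fpow (fun a b => u a b + v a b) m) = (toPS u + toPS v) ^ m := by
    rw [toPS_fpow, hadd]
  have h2 := add_pow (toPS u) (toPS v) m
  rw [h2] at h1
  have := congrArg (fun F => PowerSeries.coeff k (PowerSeries.coeff j F)) h1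
  simp only [map_sum] at this
  rw [coeff_toPS] at this
  rw [this]
  refine Finset.sum_congr rfl fun i _ => ?_
  have : (toPS u) ^ i * (toPS v) ^ (m - i) * ((m.choose i : ℕ) : PowerSeries (PowerSeries ℂ))
      = (m.choose i : ℕ) • ((toPS u) ^ i * (toPS v) ^ (m - i)) := by
    rw [nsmul_eq_mul, mul_comm]
  rw [this, map_nsmul, map_nsmul, ← toPS_fpow, ← toPS_fpow, ← toPS_fmul, coeff_toPS,
    nsmul_eq_mul]

lemma fmul_oneF_right (f : FPS) (j k : ℕ) : fmul f oneF j k = f j k := by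
  unfold fmul
  rw [Finset.sum_eq_single j]
  · rw [Finset.sum_eq_single k]
    · simp [oneF]
    · intro b hb hb1
      simp only [Finset.mem_range] at hb
      have : k - b ≠ 0 := by omega
      simp [oneF, this]
    · intro h; simp at h
  · intro a ha ha1
    simp only [Finset.mem_range] at ha
    apply Finset.sum_eq_zero; intro b _
    have : ¬ (j - a = 0 ∧ k - b = 0) := by omega
    simp [oneF, this]
  · intro h; simp at h

lemma fmul_oneF_left (f : FPS) (j k : ℕ) : fmul oneF f j k = f j k := by
  unfold fmul
  rw [Finset.sum_eq_single 0]
  · rw [Finset.sum_eq_single 0]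
    · simp [oneF]
    · intro b _ hb; simp [oneF, hb]
    · intro h; simp at h
  · intro a _ ha
    apply Finset.sum_eq_zero; intro b _
    simp [oneF, ha]
  · intro h; simp at h

lemma fpow_order {u : FPS} (hu : u 0 0 = 0) :
    ∀ m j k, j + k < m → fpow u m j k = 0 := by
  intro m
  induction m with
  | zero => intro j k h; omega
  | succ m ih =>
    intro j k h
    rw [fpow_succ']
    unfold fmul
    apply Finset.sum_eq_zero; intro a ha
    apply Finset.sum_eq_zero; intro b hb
    simp only [Finset.mem_range] at ha hb
    rcases Nat.eq_zero_or_pos (a + b) with h0 | hpos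
    · obtain ⟨rfl, rfl⟩ : a = 0 ∧ b = 0 := by omega
      simp [hu]
    · rw [ih (j-a) (k-b) (by omega), mul_zero]

lemma fpow_leading {u : FPS} (hu : u 0 0 = 0) :
    ∀ m j k, j + k = m → fpow u m j k = (m.choose j : ℂ) * u 1 0 ^ j * u 0 1 ^ k := by
  intro m
  induction m with
  | zero =>
    intro j k h
    obtain ⟨rfl, rfl⟩ : j = 0 ∧ k = 0 := by omega
    simp [fpow_zero', oneF]
  | succ m ih =>
    intro j k h
    rw [fpow_succ']
    unfold fmul
    rcases Nat.eq_zero_or_pos j with rfl | hj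
    · -- j = 0, k = m + 1
      rw [Finset.sum_range_one]
      rw [Finset.sum_eq_single 1]
      · rw [Nat.sub_self, ih 0 (k-1) (by omega)]
        have hk1 : k - 1 + 1 = k := by omega
        simp only [Nat.choose_zero_right, Nat.cast_one, one_mul, pow_zero]
        rw [← pow_succ', hk1]
      · intro b hb hb1
        simp only [Finset.mem_range] at hb
        rcases Nat.eq_zero_or_pos b with rfl | hbpos
        · simp [hu]
        · rw [Nat.sub_self, fpow_order hu m 0 (k-b) (by omega), mul_zero]
      · intro hk1; simp at hk1; omega
    rcases Nat.eq_zero_or_pos k with rfl | hk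
    · -- k = 0, j = m + 1
      rw [Finset.sum_eq_single 1]
      · rw [Finset.sum_range_one, Nat.sub_self, ih (j-1) 0 (by omega)]
        have hj1 : j - 1 + 1 = j := by omega
        simp only [Nat.choose_self, pow_zero, mul_one]
        have : (m+1).choose j = 1 := by rw [← h]; simp
        rw [this, show m.choose (j-1) = 1 by rw [show j - 1 = m by omega]; simp]
        simp only [Nat.cast_one, one_mul]
        rw [← pow_succ', hj1]
      · intro a ha ha1
        simp only [Finset.mem_range] at ha
        rw [Finset.sum_range_one]
        rcases Nat.eq_zero_or_pos a with rfl | hapos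
        · simp [hu]
        · rw [Nat.sub_self, fpow_order hu m (j-a) 0 (by omega), mul_zero]
      · intro h1; simp at h1; omega
    · -- j ≥ 1, k ≥ 1
      have hsplit : ∀ a ∈ Finset.range (j+1),
          (∑ b ∈ Finset.range (k+1), u a b * fpow u m (j-a) (k-b))
            = (if a = 0 then (u 0 1 * fpow u m j (k-1)) else 0)
              + (if a = 1 then (u 1 0 * fpow u m (j-1) k) else 0) := by
        intro a ha
        simp only [Finset.mem_range] at ha
        rcases Nat.eq_zero_or_pos a with rfl | hapos
        · simp only [if_pos rfl, if_neg (by omega : ¬ (0:ℕ) = 1), add_zero]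
          rw [Finset.sum_eq_single 1]
          · rw [Nat.sub_zero]; simp
          · intro b hb hb1
            simp only [Finset.mem_range] at hb
            rcases Nat.eq_zero_or_pos b with rfl | hbpos
            · simp [hu]
            · rw [Nat.sub_zero, fpow_order hu m j (k-b) (by omega), mul_zero]
          · intro h1; simp at h1; omega
        · rcases Nat.eq_zero_or_pos (a - 1) with ha1 | ha2
          · have : a = 1 := by omega
            subst this
            simp only [if_neg (by omega : ¬ (1:ℕ) = 0), if_pos rfl, zero_add]
            rw [Finset.sum_eq_single 0]
            · rfl
            · intro b hb hb0
              simp only [Finset.mem_range] at hb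
              rw [fpow_order hu m (j-1) (k-b) (by omega), mul_zero]
            · intro h0; simp at h0
          · rw [if_neg (by omega), if_neg (by omega), add_zero]
            apply Finset.sum_eq_zero; intro b hb
            simp only [Finset.mem_range] at hb
            rw [fpow_order hu m (j-a) (k-b) (by omega), mul_zero]
      rw [Finset.sum_congr rfl hsplit, Finset.sum_add_distrib]
      rw [Finset.sum_ite_eq' (Finset.range (j+1)) 0, Finset.sum_ite_eq' (Finset.range (j+1)) 1]
      rw [if_pos (by simp), if_pos (by simp; omega)]
      rw [ih j (k-1) (by omega), ih (j-1) k (by omega)]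
      have e1 : u 0 1 ^ k = u 0 1 * u 0 1 ^ (k-1) := by
        rw [← pow_succ', show k - 1 + 1 = k by omega]
      have e2 : u 1 0 ^ j = u 1 0 * u 1 0 ^ (j-1) := by
        rw [← pow_succ', show j - 1 + 1 = j by omega]
      have hch : ((m+1).choose j : ℂ) = (m.choose (j-1) : ℂ) + (m.choose j : ℂ) := by
        rw [show j = (j-1)+1 by omega, Nat.choose_succ_succ, show j - 1 + 1 - 1 = j - 1 by omega]
        push_cast; ring
      rw [e1, e2, hch]; ring

lemma fpow_coorder {u : FPS} (hu : ∀ a b, a + b ≠ 1 → u a b = 0) :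
    ∀ m j k, j + k ≠ m → fpow u m j k = 0 := by
  intro m
  induction m with
  | zero =>
    intro j k hne
    rw [fpow_zero']
    have : ¬ (j = 0 ∧ k = 0) := by omega
    simp [oneF, this]
  | succ m ih =>
    intro j k hne
    rw [fpow_succ']
    unfold fmul
    apply Finset.sum_eq_zero; intro a ha
    apply Finset.sum_eq_zero; intro b hb
    simp only [Finset.mem_range] at ha hb
    rcases eq_or_ne (a + b) 1 with h1 | h1
    · rw [ih (j-a) (k-b) (by omega), mul_zero]
    · rw [hu a b h1, zero_mul]

lemma fpow_halfSum (m j k : ℕ) :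
    fpow halfSum m j k = if j + k = m then ((m.choose j : ℂ) / 2 ^ m) else 0 := by
  rcases eq_or_ne (j + k) m with h | h
  · rw [if_pos h]
    rw [fpow_leading (by simp [halfSum]) m j k h]
    have h1 : halfSum 1 0 = 1/2 := by simp [halfSum]
    have h2 : halfSum 0 1 = 1/2 := by simp [halfSum]
    rw [h1, h2, div_pow, div_pow, one_pow, one_pow, ← h, pow_add]
    ring
  · rw [if_neg h, fpow_coorder (by intro a b hab; unfold halfSum; rw [if_neg (by omega), if_neg (by omega)]) m j k h]

lemma fpow_halfDiff (m j k : ℕ) :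
    fpow halfDiff m j k = if j + k = m then ((-1 : ℂ)^k * (m.choose j : ℂ) / 2 ^ m) else 0 := by
  rcases eq_or_ne (j + k) m with h | h
  · rw [if_pos h]
    rw [fpow_leading (by simp [halfDiff]) m j k h]
    have h1 : halfDiff 1 0 = 1/2 := by simp [halfDiff]
    have h2 : halfDiff 0 1 = -(1/2) := by simp [halfDiff]
    rw [h1, h2, neg_pow, div_pow, div_pow, one_pow, one_pow, ← h, pow_add]
    ring
  · rw [if_neg h, fpow_coorder (by intro a b hab; unfold halfDiff; rw [if_neg (by omega), if_neg (by omega)]) m j k h]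

lemma substOne_halfSum (q : OPS) (j k : ℕ) :
    substOne q halfSum j k = q (j+k) * ((j+k).choose j : ℂ) / 2 ^ (j+k) := by
  unfold substOne
  rw [Finset.sum_eq_single (j+k)]
  · rw [fpow_halfSum, if_pos rfl]; ring
  · intro m _ hm
    rw [fpow_halfSum, if_neg (fun hc => hm hc.symm), mul_zero]
  · intro h; simp at h

lemma substOne_halfDiff (q : OPS) (j k : ℕ) :
    substOne q halfDiff j k = q (j+k) * ((-1:ℂ)^k * ((j+k).choose j : ℂ)) / 2 ^ (j+k) := by
  unfold substOne
  rw [Finset.sum_eq_single (j+k)]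
  · rw [fpow_halfDiff, if_pos rfl]; ring
  · intro m _ hm
    rw [fpow_halfDiff, if_neg (fun hc => hm hc.symm), mul_zero]
  · intro h; simp at h

lemma Sq_order {r : OPS} {d : ℕ} (hr : ∀ m, m < d → r m = 0) (j k : ℕ) (h : j + k < d) :
    Sq r j k = 0 := by
  unfold Sq fmul
  apply Finset.sum_eq_zero; intro a ha
  apply Finset.sum_eq_zero; intro b hb
  simp only [Finset.mem_range] at ha hb
  rw [substOne_halfSum, hr (a+b) (by omega)]
  simp

/-- the Kronecker delta series -/
def eDelta (d : ℕ) : OPS := fun m => if m = d then 1 else 0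

lemma Sq_eDelta_leading (d m' n' : ℕ) (h : m' + n' = d) :
    Sq (eDelta d) m' n' = (d.choose m' : ℂ) / 2 ^ d := by
  unfold Sq fmul
  rw [Finset.sum_eq_single m']
  · rw [Finset.sum_eq_single n']
    · rw [substOne_halfSum, Nat.sub_self, Nat.sub_self, h]
      have : substOne cosSeries halfDiff 0 0 = 1 := by
        unfold substOne
        rw [Finset.sum_range_one, fpow_zero']
        simp [cosSeries, oneF]
      rw [this, eDelta, if_pos rfl]
      ring
    · intro b hb hb1
      simp only [Finset.mem_range] at hb
      rw [substOne_halfSum, eDelta, if_neg (by omega), zero_mul, zero_div, zero_mul]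
    · intro hn; simp at hn
  · intro a ha ha1
    simp only [Finset.mem_range] at ha
    apply Finset.sum_eq_zero; intro b hb
    simp only [Finset.mem_range] at hb
    rw [substOne_halfSum, eDelta, if_neg (by omega), zero_mul, zero_div, zero_mul]
  · intro hm; simp at hm

lemma fmul_fpow_order {u v : FPS} (hu : u 0 0 = 0) (hv : v 0 0 = 0) (m' n' j k : ℕ)
    (h : j + k < m' + n') : fmul (fpow u m') (fpow v n') j k = 0 := by
  unfold fmul
  apply Finset.sum_eq_zero; intro a ha
  apply Finset.sum_eq_zero; intro b hb
  simp only [Finset.mem_range] at ha hb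
  rcases Nat.lt_or_ge (a + b) m' with h1 | h1
  · rw [fpow_order hu m' a b h1, zero_mul]
  · rw [fpow_order hv n' (j-a) (k-b) (by omega), mul_zero]

lemma subst2_order {F u v : FPS} (hu : u 0 0 = 0) (hv : v 0 0 = 0) {d : ℕ}
    (hF : ∀ m n, m + n < d → F m n = 0) (j k : ℕ) (h : j + k < d) :
    subst2 F u v j k = 0 := by
  unfold subst2
  apply Finset.sum_eq_zero; intro m' _
  apply Finset.sum_eq_zero; intro n' _
  rcases Nat.lt_or_ge (m' + n') d with h1 | h1
  · rw [hF m' n' h1, zero_mul]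
  · rw [fmul_fpow_order hu hv m' n' j k (by omega), mul_zero]

lemma substOne_add_app (q q' : OPS) (w : FPS) (j k : ℕ) :
    substOne (fun m => q m + q' m) w j k = substOne q w j k + substOne q' w j k := by
  unfold substOne
  rw [← Finset.sum_add_distrib]
  exact Finset.sum_congr rfl fun m _ => add_mul _ _ _

lemma substOne_smul_app (c : ℂ) (q : OPS) (w : FPS) (j k : ℕ) :
    substOne (fun m => c * q m) w j k = c * substOne q w j k := by
  unfold substOne
  rw [Finset.mul_sum]
  exact Finset.sum_congr rfl fun m _ => mul_assoc _ _ _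

lemma Sq_add_app (q q' : OPS) (j k : ℕ) :
    Sq (fun m => q m + q' m) j k = Sq q j k + Sq q' j k := by
  unfold Sq fmul
  rw [← Finset.sum_add_distrib]
  refine Finset.sum_congr rfl fun a _ => ?_
  rw [← Finset.sum_add_distrib]
  refine Finset.sum_congr rfl fun b _ => ?_
  rw [substOne_add_app, add_mul]

lemma Sq_smul_app (c : ℂ) (q : OPS) (j k : ℕ) :
    Sq (fun m => c * q m) j k = c * Sq q j k := by
  unfold Sq fmul
  rw [Finset.mul_sum]
  refine Finset.sum_congr rfl fun a _ => ?_
  rw [Finset.mul_sum]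
  refine Finset.sum_congr rfl fun b _ => ?_
  rw [substOne_smul_app, mul_assoc]

lemma subst2_congr_app {F G u v : FPS} (h : ∀ m n, F m n = G m n) (j k : ℕ) :
    subst2 F u v j k = subst2 G u v j k := by
  unfold subst2
  exact Finset.sum_congr rfl fun m _ => Finset.sum_congr rfl fun n _ => by rw [h]

lemma subst2Sq_add (q q' : OPS) (u v : FPS) (j k : ℕ) :
    subst2 (Sq (fun m => q m + q' m)) u v j k
      = subst2 (Sq q) u v j k + subst2 (Sq q') u v j k := by
  rw [subst2_congr_app (fun m n => Sq_add_app q q' m n)]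
  unfold subst2
  rw [← Finset.sum_add_distrib]
  refine Finset.sum_congr rfl fun m _ => ?_
  rw [← Finset.sum_add_distrib]
  refine Finset.sum_congr rfl fun n _ => ?_
  rw [add_mul]

lemma subst2Sq_smul (c : ℂ) (q : OPS) (u v : FPS) (j k : ℕ) :
    subst2 (Sq (fun m => c * q m)) u v j k = c * subst2 (Sq q) u v j k := by
  rw [subst2_congr_app (fun m n => Sq_smul_app c q m n)]
  unfold subst2
  rw [Finset.mul_sum]
  refine Finset.sum_congr rfl fun m _ => ?_
  rw [Finset.mul_sum]
  refine Finset.sum_congr rfl fun n _ => ?_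
  rw [mul_assoc]

lemma subst2Sq_zero (u v : FPS) (j k : ℕ) :
    subst2 (Sq (fun _ => (0:ℂ))) u v j k = 0 := by
  have := subst2Sq_smul 0 (fun _ => (0:ℂ)) u v j k
  simpa using this

lemma subst2Sq_sum {ι : Type} [DecidableEq ι] (s : Finset ι) (r : ι → OPS) (u v : FPS) (j k : ℕ) :
    subst2 (Sq (fun m => ∑ i ∈ s, r i m)) u v j k
      = ∑ i ∈ s, subst2 (Sq (r i)) u v j k := by
  induction s using Finset.induction_on with
  | empty => simpa using subst2Sq_zero u v j k
  | insert a s hnotmem ih =>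
    have : (fun m => ∑ i ∈ insert a s, r i m)
        = (fun m => r a m + ∑ i ∈ s, r i m) := by
      funext m; rw [Finset.sum_insert hnotmem]
    rw [this, subst2Sq_add, ih, Finset.sum_insert hnotmem]

lemma subst2Sq_decomp {u v : FPS} (hu : u 0 0 = 0) (hv : v 0 0 = 0) (r : OPS) (j k : ℕ) :
    subst2 (Sq r) u v j k
      = ∑ m ∈ Finset.range (j+k+1), r m * subst2 (Sq (eDelta m)) u v j k := by
  have hr : r = fun m => (fun m => ∑ i ∈ Finset.range (j+k+1), r i * eDelta i m) m
      + (fun m => if j + k < m then r m else 0) m := by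
    funext m
    show r m = (∑ i ∈ Finset.range (j+k+1), r i * eDelta i m) + (if j + k < m then r m else 0)
    by_cases h : m ≤ j + k
    · rw [if_neg (by omega), add_zero]
      rw [Finset.sum_eq_single m]
      · rw [eDelta, if_pos rfl, mul_one]
      · intro i _ hi
        rw [eDelta, if_neg (Ne.symm hi), mul_zero]
      · intro hm; exfalso; exact hm (Finset.mem_range.mpr (by omega))
    · rw [if_pos (by omega)]
      rw [Finset.sum_eq_zero, zero_add]
      intro i hi
      simp only [Finset.mem_range] at hi
      rw [eDelta, if_neg (by omega), mul_zero]
  calc subst2 (Sq r) u v j k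
      = subst2 (Sq (fun m => (fun m => ∑ i ∈ Finset.range (j+k+1), r i * eDelta i m) m
          + (fun m => if j + k < m then r m else 0) m)) u v j k := by rw [← hr]
    _ = subst2 (Sq (fun m => ∑ i ∈ Finset.range (j+k+1), r i * eDelta i m)) u v j k
          + subst2 (Sq (fun m => if j + k < m then r m else 0)) u v j k := by
        exact subst2Sq_add _ _ u v j k
    _ = ∑ m ∈ Finset.range (j+k+1), r m * subst2 (Sq (eDelta m)) u v j k := by
        rw [show subst2 (Sq (fun m => if j + k < m then r m else 0)) u v j k = 0 from
          subst2_order hu hv (d := j + k + 1)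
          (fun m n hmn => Sq_order (fun i hi => by rw [if_neg (by omega)]) m n hmn) j k
          (by omega), add_zero]
        rw [subst2Sq_sum]
        refine Finset.sum_congr rfl fun i _ => ?_
        exact subst2Sq_smul (r i) (eDelta i) u v j k

lemma subst2Sq_eDelta_lead {u v : FPS} (hu : u 0 0 = 0) (hv : v 0 0 = 0)
    (d j k : ℕ) (hjk : j + k = d) :
    subst2 (Sq (eDelta d)) u v j k
      = (d.choose j : ℂ) * (u 1 0 + v 1 0) ^ j * (u 0 1 + v 0 1) ^ k / 2 ^ d := by
  have hDel : ∀ m, m < d → eDelta d m = 0 := fun m hm => by rw [eDelta, if_neg (by omega)]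
  unfold subst2
  have hinner : ∀ m' ∈ Finset.range (j+k+1),
      (∑ n' ∈ Finset.range (j+k+1), Sq (eDelta d) m' n' * fmul (fpow u m') (fpow v n') j k)
        = ((d.choose m' : ℂ) / 2 ^ d) * fmul (fpow u m') (fpow v (d - m')) j k := by
    intro m' hm'
    simp only [Finset.mem_range] at hm'
    rw [Finset.sum_eq_single (d - m')]
    · rw [Sq_eDelta_leading d m' (d - m') (by omega)]
    · intro n' hn' hne
      simp only [Finset.mem_range] at hn'
      rcases Nat.lt_or_ge (m' + n') d with h1 | h1
      · rw [Sq_order hDel m' n' h1, zero_mul]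
      · have : j + k < m' + n' := by omega
        rw [fmul_fpow_order hu hv m' n' j k this, mul_zero]
    · intro hmem; exfalso; exact hmem (Finset.mem_range.mpr (by omega))
  rw [Finset.sum_congr rfl hinner]
  have : ∑ m' ∈ Finset.range (j+k+1),
      ((d.choose m' : ℂ) / 2 ^ d) * fmul (fpow u m') (fpow v (d - m')) j k
      = (1 / 2^d) * ∑ m' ∈ Finset.range (d+1),
          (d.choose m' : ℂ) * fmul (fpow u m') (fpow v (d - m')) j k := by
    rw [Finset.mul_sum, hjk]
    refine Finset.sum_congr rfl fun m' _ => ?_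
    ring
  rw [this, ← fpow_add_apply, fpow_leading (by rw [hu, hv, add_zero]) d j k hjk]
  ring

lemma fpow_one_app (u : FPS) (a b : ℕ) : fpow u 1 a b = u a b := by
  rw [fpow_succ', fpow_zero', fmul_oneF_right]

lemma cos0 : cosSeries 0 = 1 := by simp [cosSeries]
lemma cos1 : cosSeries 1 = 0 := by simp [cosSeries]
lemma cos2 : cosSeries 2 = -(1/2) := by norm_num [cosSeries, Nat.factorial]
lemma cos3 : cosSeries 3 = 0 := by norm_num [cosSeries]

lemma Sq_eDelta0 (m n : ℕ) :
    Sq (eDelta 0) m n = cosSeries (m+n) * ((-1:ℂ)^n * ((m+n).choose m : ℂ)) / 2 ^ (m+n) := by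
  have h1 : ∀ a b : ℕ, substOne (eDelta 0) halfSum a b = oneF a b := by
    intro a b
    rw [substOne_halfSum, eDelta, oneF]
    rcases Nat.eq_zero_or_pos (a+b) with h0 | hpos
    · obtain ⟨rfl, rfl⟩ : a = 0 ∧ b = 0 := by omega
      norm_num
    · rw [if_neg (by omega), if_neg (by omega)]
      simp
  unfold Sq
  have : ∀ j k : ℕ, fmul (substOne (eDelta 0) halfSum) (substOne cosSeries halfDiff) j k
      = fmul oneF (substOne cosSeries halfDiff) j k := by
    intro j k; unfold fmul
    exact Finset.sum_congr rfl fun a _ => Finset.sum_congr rfl fun b _ => by rw [h1]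
  rw [this, fmul_oneF_left, substOne_halfDiff]

lemma E0_val {u v : FPS} (hu0 : u 0 0 = 0) (hv0 : v 0 0 = 0) :
    subst2 (Sq (eDelta 0)) u v 1 1
      = -(1/4) * (u 1 0 * u 0 1) + (1/4) * (u 0 1 * v 1 0 + u 1 0 * v 0 1)
        - (1/4) * (v 1 0 * v 0 1) := by
  have hG22 : fmul (fpow u 2) (fpow v 2) 1 1 = 0 :=
    fmul_fpow_order hu0 hv0 2 2 1 1 (by norm_num)
  have hG20 : fmul (fpow u 2) (fpow v 0) 1 1 = 2 * (u 1 0 * u 0 1) := by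
    rw [fpow_zero', fmul_oneF_right, fpow_leading hu0 2 1 1 rfl]
    norm_num
    ring
  have hG02 : fmul (fpow u 0) (fpow v 2) 1 1 = 2 * (v 1 0 * v 0 1) := by
    rw [fpow_zero', fmul_oneF_left, fpow_leading hv0 2 1 1 rfl]
    norm_num
    ring
  have hG11 : fmul (fpow u 1) (fpow v 1) 1 1 = u 0 1 * v 1 0 + u 1 0 * v 0 1 := by
    unfold fmul
    simp only [Finset.sum_range_succ, Finset.sum_range_zero, fpow_one_app]
    simp [hu0, hv0]
  have hG00 : fmul (fpow u 0) (fpow v 0) 1 1 = 0 := by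
    rw [fpow_zero' u, fpow_zero' v, fmul_oneF_left]
    simp [oneF]
  unfold subst2
  simp only [Finset.sum_range_succ, Finset.sum_range_zero, Sq_eDelta0]
  norm_num [cos0, cos1, cos2, cos3, hG22, hG20, hG02, hG11, hG00]
  ring

lemma C00' : substOne cosSeries halfDiff 0 0 = 1 := by
  rw [substOne_halfDiff, cos0]; norm_num

lemma subst2Sq_00 (r : OPS) (u v : FPS) : subst2 (Sq r) u v 0 0 = r 0 := by
  unfold subst2
  rw [Finset.sum_range_one, Finset.sum_range_one]
  have hS : Sq r 0 0 = r 0 := by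
    unfold Sq fmul
    rw [Finset.sum_range_one, Finset.sum_range_one, substOne_halfSum, C00']
    norm_num
  rw [hS, fpow_zero' u, fpow_zero' v, fmul_oneF_left]
  simp [oneF]

/-- the linear functional: diagonal coefficient `n` of `[S_r(φ⁻, φ)]`. -/
def Lq (l : ℂ) (φ : FPS) (r : OPS) (n : ℕ) : ℂ := subst2 (Sq r) (minus l φ) φ n n

/-- the recursively-defined correction coefficients `η_{2k}` (index `k`). -/
def eta (l : ℂ) (q : OPS) (φ : FPS) : ℕ → ℂ
  | n =>
    -(Lq l φ q n + ∑ k ∈ (Finset.range n).attach,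
        (if 2 ≤ (k : ℕ) then eta l q φ k * Lq l φ (eDelta (2 * (k:ℕ))) n else 0))
      / Lq l φ (eDelta (2 * n)) n
  termination_by n => n
  decreasing_by exact Finset.mem_range.mp k.2

lemma eta_def (l : ℂ) (q : OPS) (φ : FPS) (n : ℕ) :
    eta l q φ n
      = -(Lq l φ q n + ∑ k ∈ Finset.range n,
          (if 2 ≤ k then eta l q φ k * Lq l φ (eDelta (2 * k)) n else 0))
        / Lq l φ (eDelta (2 * n)) n := by
  rw [eta]
  congr 2
  rw [← Finset.sum_attach (Finset.range n)
    (fun k => if 2 ≤ k then eta l q φ k * Lq l φ (eDelta (2 * k)) n else 0)]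

lemma minus00 {l : ℂ} {φ : FPS} (hφ0 : φ 0 0 = 0) : minus l φ 0 0 = 0 := by
  unfold minus; rw [hφ0, mul_zero]

lemma minus10 {l : ℂ} {φ : FPS} (hφ : normalized φ) : minus l φ 1 0 = l⁻¹ := by
  unfold minus; rw [hφ.2.1, mul_one]
  norm_num

lemma minus01 {l : ℂ} {φ : FPS} (hφ : normalized φ) : minus l φ 0 1 = l := by
  unfold minus; rw [hφ.2.2.1, mul_one]
  norm_num

lemma Lq_add {l : ℂ} {φ : FPS} (r s : OPS) (n : ℕ) :
    Lq l φ (fun m => r m + s m) n = Lq l φ r n + Lq l φ s n :=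
  subst2Sq_add r s (minus l φ) φ n n

lemma Lq_eDelta_diag {l : ℂ} {φ : FPS} (hφ : normalized φ) (n : ℕ) :
    Lq l φ (eDelta (2*n)) n
      = ((2*n).choose n : ℂ) * (l⁻¹ + 1)^n * (l + 1)^n / 2^(2*n) := by
  unfold Lq
  rw [subst2Sq_eDelta_lead (minus00 hφ.1) hφ.1 (2*n) n n (by omega),
    minus10 hφ, minus01 hφ, hφ.2.1, hφ.2.2.1]

lemma Lq_eDelta_diag_ne {l : ℂ} {φ : FPS} (hl0 : l ≠ 0) (hl1 : l + 1 ≠ 0)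
    (hφ : normalized φ) (n : ℕ) : Lq l φ (eDelta (2*n)) n ≠ 0 := by
  rw [Lq_eDelta_diag hφ]
  have hinv : l⁻¹ + 1 ≠ 0 := by
    intro h
    have h1 : l⁻¹ = -1 := eq_neg_of_add_eq_zero_left h
    have h2 : l = -1 := by
      have h3 := congrArg (fun x : ℂ => x⁻¹) h1
      simp only [inv_inv] at h3
      rw [h3]; norm_num
    rw [h2] at hl1; norm_num at hl1
  apply div_ne_zero
  · refine mul_ne_zero (mul_ne_zero ?_ (pow_ne_zero _ hinv)) (pow_ne_zero _ hl1)
    exact_mod_cast Nat.cast_ne_zero.mpr (Nat.choose_pos (by omega)).ne'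
  · exact pow_ne_zero _ two_ne_zero

lemma Lq_eDelta_high {l : ℂ} {φ : FPS} (hφ0 : φ 0 0 = 0) {m n : ℕ} (h : n + n < m) :
    Lq l φ (eDelta m) n = 0 := by
  unfold Lq
  exact subst2_order (minus00 hφ0) hφ0 (d := m)
    (fun a b hab => Sq_order (fun i hi => by rw [eDelta, if_neg (by omega)]) a b hab) n n h

lemma Lq_decomp {l : ℂ} {φ : FPS} (hφ0 : φ 0 0 = 0) (r : OPS) (n : ℕ) :
    Lq l φ r n = ∑ m ∈ Finset.range (n+n+1), r m * Lq l φ (eDelta m) n := by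
  unfold Lq; exact subst2Sq_decomp (minus00 hφ0) hφ0 r n n

lemma eta_sum_conv (n : ℕ) (f : ℕ → ℂ) :
    (∑ k ∈ Finset.range n, if 2 ≤ k then f k else 0) = ∑ k ∈ Finset.Icc 2 (n-1), f k := by
  rw [← Finset.sum_filter]
  apply Finset.sum_congr _ (fun _ _ => rfl)
  ext k
  simp only [Finset.mem_filter, Finset.mem_range, Finset.mem_Icc]
  omega

lemma eta_def' (l : ℂ) (q : OPS) (φ : FPS) (n : ℕ) :
    eta l q φ n
      = -(Lq l φ q n + ∑ j ∈ Finset.Icc 2 (n-1), eta l q φ j * Lq l φ (eDelta (2*j)) n)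
        / Lq l φ (eDelta (2*n)) n := by
  rw [eta_def, eta_sum_conv]

lemma eta_char {l : ℂ} {q : OPS} {φ : FPS} (hl0 : l ≠ 0) (hl1 : l + 1 ≠ 0)
    (hφ : normalized φ) (n : ℕ) :
    eta l q φ n * Lq l φ (eDelta (2*n)) n
      = -(Lq l φ q n + ∑ j ∈ Finset.Icc 2 (n-1), eta l q φ j * Lq l φ (eDelta (2*j)) n) := by
  rw [eta_def', div_mul_cancel₀ _ (Lq_eDelta_diag_ne hl0 hl1 hφ n)]

lemma Lq_one_base {l : ℂ} {q : OPS} {φ : FPS} (hl0 : l ≠ 0)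
    (hq0 : q 0 = 1) (hq1 : q 1 = 0)
    (hq2 : q 2 * (l + 1) ^ 2 = (-(1 / 2) : ℂ) * (l - 1) ^ 2) (hφ : normalized φ) :
    Lq l φ q 1 = 0 := by
  have hd : Lq l φ q 1 = ∑ m ∈ Finset.range 3, q m * Lq l φ (eDelta m) 1 :=
    Lq_decomp hφ.1 q 1
  have e0 : Lq l φ (eDelta 0) 1
      = -(1/4) * (l⁻¹ * l) + (1/4) * (l * 1 + l⁻¹ * 1) - (1/4) * (1 * 1) := by
    unfold Lq
    rw [E0_val (minus00 hφ.1) hφ.1, minus10 hφ, minus01 hφ, hφ.2.1, hφ.2.2.1]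
  have e2 : Lq l φ (eDelta 2) 1 = (2 : ℂ) * (l⁻¹ + 1) * (l + 1) / 4 := by
    have := Lq_eDelta_diag (l := l) hφ 1
    norm_num at this
    rw [this]
  rw [hd, Finset.sum_range_succ, Finset.sum_range_succ, Finset.sum_range_one,
    hq0, hq1, e0, e2, one_mul, zero_mul, add_zero]
  have hinv : l⁻¹ = 1 / l := by rw [one_div]
  rw [hinv]
  field_simp
  linear_combination (2 : ℂ) * hq2

/-- For every `M ≥ 2` there is a unique polynomial
`Δq(t) = Σ_{k=2}^{M} η_{2k} t^{2k}` with `Λ_{2M}([S_{q+Δq}(φ⁻,φ)]) = 1`; moreover if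
`Λ_{2N}([S_q(φ⁻,φ)] − 1) = 0` for some `N < M` then `Λ_{2N}(Δq) = 0`. -/
theorem truncated_outer_equation
    (l : ℂ) (hl : ‖l‖ = 1) (hru : ∀ n : ℕ, 0 < n → l ^ n ≠ 1)
    (q : OPS) (hq0 : q 0 = 1) (hqe : ∀ m : ℕ, Odd m → q m = 0)
    (hq2 : q 2 * (l + 1) ^ 2 = (-(1 / 2) : ℂ) * (l - 1) ^ 2)
    (φ : FPS) (hφ : normalized φ) (hsym : swapI φ = φ)
    (M : ℕ) (hM : 2 ≤ M) :
    (∃! Δq : OPS,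
      (∀ m : ℕ, (Odd m ∨ m < 4 ∨ 2 * M < m) → Δq m = 0) ∧
      (∀ j k : ℕ, j + k ≤ 2 * M →
        avg (subst2 (Sq (q + Δq)) (minus l φ) φ) j k = oneF j k)) ∧
    (∀ Δq : OPS,
      ((∀ m : ℕ, (Odd m ∨ m < 4 ∨ 2 * M < m) → Δq m = 0) ∧
        (∀ j k : ℕ, j + k ≤ 2 * M →
          avg (subst2 (Sq (q + Δq)) (minus l φ) φ) j k = oneF j k)) →
      ∀ N : ℕ, N < M →
        (∀ j k : ℕ, j + k ≤ 2 * N →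
          avg (subst2 (Sq q) (minus l φ) φ) j k = oneF j k) →
        ∀ m : ℕ, m ≤ 2 * N → Δq m = 0) := by
  have hl0 : l ≠ 0 := by
    intro h; rw [h] at hl; simp at hl
  have hl1 : l + 1 ≠ 0 := by
    intro h
    have h2 : l = -1 := by linear_combination h
    apply hru 2 (by norm_num)
    rw [h2]; norm_num
  have hq1 : q 1 = 0 := hqe 1 ⟨0, by norm_num⟩
  set Dq : OPS := fun m => ∑ k ∈ Finset.Icc 2 M, if m = 2*k then eta l q φ k else 0
    with hDqdef
  have hDqsupp : ∀ m : ℕ, (Odd m ∨ m < 4 ∨ 2 * M < m) → Dq m = 0 := by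
    intro m hm
    simp only [hDqdef]
    apply Finset.sum_eq_zero
    intro k hk
    simp only [Finset.mem_Icc] at hk
    rw [if_neg]
    intro hmk
    rcases hm with hodd | h4 | hM'
    · obtain ⟨t, ht⟩ := hodd; omega
    · omega
    · omega
  have hDq_eval : ∀ k, 2 ≤ k → k ≤ M → Dq (2*k) = eta l q φ k := by
    intro k h2 hM'
    simp only [hDqdef]
    rw [Finset.sum_eq_single k]
    · rw [if_pos rfl]
    · intro j hj hjk
      rw [if_neg (by omega)]
    · intro hk; exact absurd (Finset.mem_Icc.mpr ⟨h2, hM'⟩) hk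
  have hDq_sum : Dq = fun m => ∑ k ∈ Finset.Icc 2 M, eta l q φ k * eDelta (2*k) m := by
    rw [hDqdef]
    funext m
    refine Finset.sum_congr rfl fun k _ => ?_
    rw [eDelta]
    split_ifs with h
    · rw [mul_one]
    · rw [mul_zero]
  have hLqDq : ∀ n : ℕ, n ≤ M → Lq l φ Dq n
      = ∑ k ∈ Finset.Icc 2 n, eta l q φ k * Lq l φ (eDelta (2*k)) n := by
    intro n hn
    have h1 : Lq l φ Dq n
        = ∑ k ∈ Finset.Icc 2 M, eta l q φ k * Lq l φ (eDelta (2*k)) n := by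
      rw [hDq_sum]
      unfold Lq
      have hs := subst2Sq_sum (Finset.Icc 2 M)
        (fun k => (fun m => eta l q φ k * eDelta (2*k) m)) (minus l φ) φ n n
      rw [hs]
      refine Finset.sum_congr rfl fun k _ => ?_
      exact subst2Sq_smul (eta l q φ k) (eDelta (2*k)) (minus l φ) φ n n
    rw [h1]
    symm
    apply Finset.sum_subset
    · intro k hk
      simp only [Finset.mem_Icc] at *
      omega
    · intro k hk hk'
      simp only [Finset.mem_Icc] at hk hk'
      rw [Lq_eDelta_high hφ.1 (by omega), mul_zero]
  have hmain : ∀ n : ℕ, 1 ≤ n → n ≤ M → Lq l φ (fun m => q m + Dq m) n = 0 := by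
    intro n h1 hn
    rw [Lq_add, hLqDq n hn]
    rcases Nat.lt_or_ge n 2 with h2 | h2
    · have hn1 : n = 1 := by omega
      subst hn1
      rw [Finset.Icc_eq_empty (by omega), Finset.sum_empty, add_zero]
      exact Lq_one_base hl0 hq0 hq1 hq2 hφ
    · have hsplit := Finset.sum_Icc_succ_top (a := 2) (b := n-1) (by omega)
        (fun k => eta l q φ k * Lq l φ (eDelta (2*k)) n)
      rw [show n - 1 + 1 = n by omega] at hsplit
      rw [hsplit, eta_char hl0 hl1 hφ n]
      ring
  have hone0 : oneF 0 0 = 1 := by simp [oneF]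
  have honeP : ∀ n : ℕ, n ≠ 0 → oneF n n = (0 : ℂ) := by
    intro n hn; simp only [oneF]; rw [if_neg (by omega)]
  have havg_fwd : ∀ (r : OPS) (M' : ℕ), (∀ n : ℕ, n ≤ M' → Lq l φ r n = oneF n n) →
      ∀ j k : ℕ, j + k ≤ 2 * M' → avg (subst2 (Sq r) (minus l φ) φ) j k = oneF j k := by
    intro r M' hr j k hjk
    unfold avg
    by_cases h : j = k
    · subst h
      rw [if_pos rfl]
      exact hr j (by omega)
    · rw [if_neg h]
      simp only [oneF]
      rw [if_neg (by omega)]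
  have havg_bwd : ∀ (r : OPS) (M' : ℕ),
      (∀ j k : ℕ, j + k ≤ 2 * M' → avg (subst2 (Sq r) (minus l φ) φ) j k = oneF j k) →
      ∀ n : ℕ, n ≤ M' → Lq l φ r n = oneF n n := by
    intro r M' hr n hn
    have h := hr n n (by omega)
    unfold avg at h
    rw [if_pos rfl] at h
    exact h
  have hDqmain : ∀ n : ℕ, n ≤ M → Lq l φ (q + Dq) n = oneF n n := by
    intro n hn
    rcases Nat.eq_zero_or_pos n with rfl | hpos
    · have h00 : Lq l φ (q + Dq) 0 = (q + Dq) 0 := subst2Sq_00 (q + Dq) (minus l φ) φ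
      rw [h00, hone0]
      have : Dq 0 = 0 := hDqsupp 0 (Or.inr (Or.inl (by norm_num)))
      simp only [Pi.add_apply, this, hq0, add_zero]
    · have hpi : Lq l φ (q + Dq) n = Lq l φ (fun m => q m + Dq m) n := rfl
      rw [hpi, hmain n hpos hn, honeP n (by omega)]
  have hUniq : ∀ y : OPS,
      ((∀ m : ℕ, (Odd m ∨ m < 4 ∨ 2 * M < m) → y m = 0) ∧
        (∀ j k : ℕ, j + k ≤ 2 * M →
          avg (subst2 (Sq (q + y)) (minus l φ) φ) j k = oneF j k)) → y = Dq := by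
    rintro y ⟨hysupp, hymain⟩
    have hyd : ∀ n : ℕ, n ≤ M → Lq l φ (q + y) n = oneF n n :=
      havg_bwd (q + y) M hymain
    have hkey : ∀ k, 2 ≤ k → k ≤ M → y (2*k) = eta l q φ k := by
      intro k
      induction k using Nat.strong_induction_on with
      | _ k IH =>
        intro hk2 hkM
        have h0 : Lq l φ q k + Lq l φ y k = 0 := by
          rw [← Lq_add]
          have hpi : Lq l φ (fun m => q m + y m) k = Lq l φ (q + y) k := rfl
          rw [hpi, hyd k hkM, honeP k (by omega)]
        rw [Lq_decomp hφ.1 y k] at h0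
        have hconv : ∑ m ∈ Finset.range (k+k+1), y m * Lq l φ (eDelta m) k
            = ∑ j ∈ Finset.Icc 2 k, y (2*j) * Lq l φ (eDelta (2*j)) k := by
          have hinj : ∀ a ∈ Finset.Icc 2 k, ∀ b ∈ Finset.Icc 2 k,
              (fun j => 2*j) a = (fun j => 2*j) b → a = b := by
            intro a _ b _ hab
            simpa using (by omega : 2*a = 2*b → a = b) (by simpa using hab)
          have himg := Finset.sum_image (g := fun j => 2*j)
            (f := fun m => y m * Lq l φ (eDelta m) k) (s := Finset.Icc 2 k) hinj
          have hsub : (Finset.Icc 2 k).image (fun j => 2*j) ⊆ Finset.range (k+k+1) := by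
            intro m hm
            simp only [Finset.mem_image, Finset.mem_Icc] at hm
            obtain ⟨j, ⟨hj2, hjk⟩, rfl⟩ := hm
            simp only [Finset.mem_range]; omega
          have hvan : ∀ m ∈ Finset.range (k+k+1),
              m ∉ (Finset.Icc 2 k).image (fun j => 2*j) →
              y m * Lq l φ (eDelta m) k = 0 := by
            intro m hm hm'
            have hy0 : y m = 0 := by
              rcases Nat.even_or_odd m with he | ho
              · obtain ⟨t, rfl⟩ := he
                apply hysupp
                right; left
                by_contra hge
                push_neg at hge
                apply hm'
                simp only [Finset.mem_image, Finset.mem_Icc]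
                simp only [Finset.mem_range] at hm
                exact ⟨t, ⟨by omega, by omega⟩, by omega⟩
              · exact hysupp _ (Or.inl ho)
            rw [hy0, zero_mul]
          rw [← Finset.sum_subset hsub hvan, himg]
        rw [hconv] at h0
        have hsplit := Finset.sum_Icc_succ_top (a := 2) (b := k-1) (by omega)
          (fun j => y (2*j) * Lq l φ (eDelta (2*j)) k)
        rw [show k - 1 + 1 = k by omega] at hsplit
        rw [hsplit] at h0
        have hIH : ∑ j ∈ Finset.Icc 2 (k-1), y (2*j) * Lq l φ (eDelta (2*j)) k
            = ∑ j ∈ Finset.Icc 2 (k-1), eta l q φ j * Lq l φ (eDelta (2*j)) k := by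
          refine Finset.sum_congr rfl fun j hj => ?_
          simp only [Finset.mem_Icc] at hj
          rw [IH j (by omega) hj.1 (by omega)]
        rw [hIH] at h0
        have hld := Lq_eDelta_diag_ne hl0 hl1 hφ k
        apply mul_right_cancel₀ hld
        rw [eta_char hl0 hl1 hφ k]
        linear_combination h0
    funext m
    by_cases hs : Odd m ∨ m < 4 ∨ 2*M < m
    · rw [hysupp m hs, hDqsupp m hs]
    · push_neg at hs
      obtain ⟨ho, h4, hM'⟩ := hs
      have he : Even m := Nat.not_odd_iff_even.mp ho
      obtain ⟨t, rfl⟩ := he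
      rw [show t + t = 2*t by omega]
      rw [hkey t (by omega) (by omega), hDq_eval t (by omega) (by omega)]
  refine ⟨⟨Dq, ⟨hDqsupp, havg_fwd (q + Dq) M hDqmain⟩, hUniq⟩, ?_⟩
  intro Δq hΔq N hNM hdiagavg m hm
  rw [hUniq Δq hΔq]
  have hqdiag : ∀ n, 1 ≤ n → n ≤ N → Lq l φ q n = 0 := by
    intro n h1 hn
    have h := havg_bwd q N hdiagavg n hn
    rw [honeP n (by omega)] at h
    exact h
  have hetaz : ∀ k, 2 ≤ k → k ≤ N → eta l q φ k = 0 := by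
    intro k
    induction k using Nat.strong_induction_on with
    | _ k IH =>
      intro hk2 hkN
      rw [eta_def' l q φ k, hqdiag k (by omega) hkN]
      have hz : ∑ j ∈ Finset.Icc 2 (k-1), eta l q φ j * Lq l φ (eDelta (2*j)) k = 0 := by
        apply Finset.sum_eq_zero
        intro j hj
        simp only [Finset.mem_Icc] at hj
        rw [IH j (by omega) hj.1 (by omega), zero_mul]
      rw [hz, add_zero, neg_zero, zero_div]
  by_cases hcase : Odd m ∨ m < 4 ∨ 2*M < m
  · exact hDqsupp m hcase
  · push_neg at hcase
    obtain ⟨ho, h4, hM'⟩ := hcase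
    have he : Even m := Nat.not_odd_iff_even.mp ho
    obtain ⟨t, rfl⟩ := he
    rw [show t + t = 2*t by omega]
    rw [hDq_eval t (by omega) (by omega), hetaz t (by omega) (by omega)]

end Treschev

end
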